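/- On u(2)^ℂ = ℂe₀ ⊕ sl(2,ℂ), every complex subalgebra l with u(2)^ℂ = l ⊕ ρ(l) (ρ the real structure fixing u(2)) has a basis of the form (e₀ + e', e'') with e', e'' ∈ sl(2,ℂ) satisfying [e', e''] = μ e'' for some μ ∈ ℂ*, and e'' is a nonzero nilpotent element of sl(2,ℂ). -/

import Mathlib

/-!
STATEMENT 14. On `u(2)^ℂ = ℂe₀ ⊕ sl(2,ℂ)`, every complex subalgebra `l` with
`u(2)^ℂ = l ⊕ ρ(l)` (`ρ` the real structure fixing `u(2)`) has a basis of the form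
`(e₀ + e', e'')` with `e', e'' ∈ sl(2,ℂ)` satisfying `[e', e''] = μ e''` for some
`μ ∈ ℂ*`, and `e''` is a nonzero nilpotent element of `sl(2,ℂ)`.

We realize `u(2)^ℂ` as `gl(2,ℂ) = Matrix (Fin 2) (Fin 2) ℂ`, with the real structure
`ρ(A) = -Aᴴ` whose fixed point set is `u(2)` (the skew-hermitian matrices), and
`e₀ = i·1` a generator of the center of `u(2)`.
-/
set_option maxHeartbeats 1000000

private lemma aux_cross (a b c p q r : ℂ) (h1 : q * c = b * r) (h2 : p * b = a * q)
    (h3 : r * a = p * c) (hne : ¬(a = 0 ∧ b = 0 ∧ c = 0)) :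
    ∃ t : ℂ, p = t * a ∧ q = t * b ∧ r = t * c := by
  by_cases ha : a = 0
  · by_cases hb : b = 0
    · have hc : c ≠ 0 := fun hc => hne ⟨ha, hb, hc⟩
      subst ha; subst hb
      have hp : p = 0 := by
        have h := h3; rw [mul_zero] at h
        exact (mul_eq_zero.mp h.symm).resolve_right hc
      have hq : q = 0 := by
        have h := h1; rw [zero_mul] at h
        exact (mul_eq_zero.mp h).resolve_right hc
      exact ⟨r / c, by simp [hp], by simp [hq], by field_simp⟩
    · subst ha
      have hp : p = 0 := by
        have h := h2; rw [zero_mul] at h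
        exact (mul_eq_zero.mp h).resolve_right hb
      refine ⟨q / b, by simp [hp], by field_simp, ?_⟩
      field_simp
      linear_combination -h1
  · refine ⟨p / a, by field_simp, ?_, ?_⟩ <;> field_simp
    · linear_combination -h2
    · linear_combination h3

private lemma aux_commutant (X Y : Matrix (Fin 2) (Fin 2) ℂ) (hX : X.trace = 0)
    (hY : Y.trace = 0) (hYne : Y ≠ 0) (h : X * Y = Y * X) : ∃ t : ℂ, X = t • Y := by
  have hX' : X 1 1 = -(X 0 0) := by
    have := Matrix.trace_fin_two X; rw [hX] at this; linear_combination -this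
  have hY' : Y 1 1 = -(Y 0 0) := by
    have := Matrix.trace_fin_two Y; rw [hY] at this; linear_combination -this
  have h00 : (X * Y) 0 0 = (Y * X) 0 0 := by rw [h]
  have h01 : (X * Y) 0 1 = (Y * X) 0 1 := by rw [h]
  have h10 : (X * Y) 1 0 = (Y * X) 1 0 := by rw [h]
  simp only [Matrix.mul_apply, Fin.sum_univ_two, hX', hY'] at h00 h01 h10
  have hne : ¬(Y 0 0 = 0 ∧ Y 0 1 = 0 ∧ Y 1 0 = 0) := by
    rintro ⟨ha, hb, hc⟩
    apply hYne
    rw [← Matrix.ext_iff]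
    simp only [Fin.forall_fin_two, Matrix.zero_apply]
    exact ⟨⟨ha, hb⟩, hc, by rw [hY', ha, neg_zero]⟩
  obtain ⟨t, hp, hq, hr⟩ := aux_cross (Y 0 0) (Y 0 1) (Y 1 0) (X 0 0) (X 0 1) (X 1 0)
    (by linear_combination h00) (by linear_combination h01 / 2) (by linear_combination h10 / 2) hne
  refine ⟨t, ?_⟩
  rw [← Matrix.ext_iff]
  simp only [Fin.forall_fin_two, Matrix.smul_apply, smul_eq_mul]
  exact ⟨⟨hp, hq⟩, hr, by rw [hX', hY']; linear_combination -hp⟩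

private lemma aux_sq_zero (Y : Matrix (Fin 2) (Fin 2) ℂ) (h0 : Y.trace = 0)
    (h2 : (Y * Y).trace = 0) : Y * Y = 0 := by
  have hY' : Y 1 1 = -(Y 0 0) := by
    have := Matrix.trace_fin_two Y; rw [h0] at this; linear_combination -this
  have h2' : Y 0 0 * Y 0 0 + Y 0 1 * Y 1 0 = 0 := by
    have := Matrix.trace_fin_two (Y * Y)
    rw [h2] at this
    simp only [Matrix.mul_apply, Fin.sum_univ_two, hY'] at this
    linear_combination -this / 2
  rw [← Matrix.ext_iff]
  simp only [Fin.forall_fin_two, Matrix.mul_apply, Fin.sum_univ_two, Matrix.zero_apply, hY']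
  exact ⟨⟨by linear_combination h2', by ring⟩, by ring, by linear_combination h2'⟩

attribute [local instance 100] LieRing.ofAssociativeRing

open Matrix in
theorem stmt14 (l : LieSubalgebra ℂ (Matrix (Fin 2) (Fin 2) ℂ))
    -- gl(2,ℂ) = l + ρ(l), where ρ(A) = -Aᴴ :
    (hsum : ∀ A : Matrix (Fin 2) (Fin 2) ℂ, ∃ x ∈ l, ∃ y ∈ l, A = x - yᴴ)
    -- l ∩ ρ(l) = 0 :
    (hint : ∀ x ∈ l, ∀ y ∈ l, x = -yᴴ → x = 0) :
    ∃ e' e'' : Matrix (Fin 2) (Fin 2) ℂ,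
      Matrix.trace e' = 0 ∧ Matrix.trace e'' = 0 ∧
      -- (e₀ + e', e'') is a basis of l, where e₀ = i·1 :
      l.toSubmodule
        = Submodule.span ℂ {Complex.I • (1 : Matrix (Fin 2) (Fin 2) ℂ) + e', e''} ∧
      (∃ μ : ℂ, μ ≠ 0 ∧ ⁅e', e''⁆ = μ • e'') ∧
      e'' ≠ 0 ∧ IsNilpotent e'' := by
  classical
  have h4 : Module.finrank ℂ (Matrix (Fin 2) (Fin 2) ℂ) = 4 := by
    simp [Module.finrank_matrix]
  -- I • 1 is not in l
  have hI1 : Complex.I • (1 : (Matrix (Fin 2) (Fin 2) ℂ)) ∉ l := by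
    intro hmem
    have heq : Complex.I • (1 : (Matrix (Fin 2) (Fin 2) ℂ)) = -(Complex.I • (1 : (Matrix (Fin 2) (Fin 2) ℂ)))ᴴ := by
      rw [Matrix.conjTranspose_smul, Matrix.conjTranspose_one]
      simp [Complex.conj_I]
    have h := hint _ hmem _ hmem heq
    rw [smul_eq_zero] at h
    rcases h with h | h
    · exact Complex.I_ne_zero h
    · exact one_ne_zero h
  -- there is an element of nonzero trace
  have hA : ∃ e ∈ l, Matrix.trace e ≠ 0 := by
    by_contra hcon
    push_neg at hcon
    obtain ⟨x, hx, y, hy, hxy⟩ := hsum 1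
    have := congrArg Matrix.trace hxy
    rw [Matrix.trace_sub, Matrix.trace_conjTranspose, hcon x hx, hcon y hy,
      Matrix.trace_one] at this
    simp at this
  obtain ⟨e, he, hetr⟩ := hA
  obtain ⟨f, hfl, hftr⟩ : ∃ f ∈ l, Matrix.trace f = 2 * Complex.I :=
    ⟨((2 * Complex.I) / Matrix.trace e) • e, l.smul_mem _ he, by
      rw [Matrix.trace_smul, smul_eq_mul]; field_simp⟩
  -- decomposition of elements of l
  have hdecomp : ∀ x ∈ l, x - (Matrix.trace x / (2 * Complex.I)) • f ∈ l ∧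
      Matrix.trace (x - (Matrix.trace x / (2 * Complex.I)) • f) = 0 := by
    intro x hx
    refine ⟨l.sub_mem hx (l.smul_mem _ hfl), ?_⟩
    rw [Matrix.trace_sub, Matrix.trace_smul, hftr, smul_eq_mul]
    field_simp
    ring
  -- existence of nonzero traceless element of l
  have hC : ∃ g ∈ l, Matrix.trace g = 0 ∧ g ≠ 0 := by
    by_contra hcon
    push_neg at hcon
    have hxf : ∀ x ∈ l, x = (Matrix.trace x / (2 * Complex.I)) • f := by
      intro x hx
      have h := hcon _ (hdecomp x hx).1 (hdecomp x hx).2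
      rwa [sub_eq_zero] at h
    have htop : Submodule.span ℂ ({f, fᴴ} : Set (Matrix (Fin 2) (Fin 2) ℂ)) = ⊤ := by
      rw [eq_top_iff]
      intro A _
      obtain ⟨x, hx, y, hy, hxy⟩ := hsum A
      rw [hxy, hxf x hx, hxf y hy, Matrix.conjTranspose_smul]
      apply sub_mem
      · exact Submodule.smul_mem _ _ (Submodule.subset_span (Set.mem_insert _ _))
      · exact Submodule.smul_mem _ _
          (Submodule.subset_span (Set.mem_insert_of_mem _ rfl))
    have hle : ({f, fᴴ} : Set (Matrix (Fin 2) (Fin 2) ℂ)).toFinset.card ≤ 2 := by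
      rw [Set.toFinset_insert, Set.toFinset_singleton]
      exact (Finset.card_insert_le _ _).trans (by simp)
    have hle2 := finrank_span_le_card (R := ℂ) ({f, fᴴ} : Set (Matrix (Fin 2) (Fin 2) ℂ))
    rw [htop, finrank_top] at hle2
    rw [h4] at hle2
    omega
  obtain ⟨e'', he''l, he''tr, he''ne⟩ := hC
  -- uniqueness: all traceless elements of l are multiples of e''
  have huniq : ∀ g ∈ l, Matrix.trace g = 0 → ∃ c : ℂ, g = c • e'' := by
    intro g hgl hgtr
    by_contra hcon
    push_neg at hcon
    have hind0 : ∀ s t : ℂ, s • e'' + t • g = 0 → s = 0 ∧ t = 0 := by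
      intro s t hst
      rcases eq_or_ne t 0 with ht | ht
      · subst ht
        rw [zero_smul, add_zero] at hst
        exact ⟨(smul_eq_zero.mp hst).resolve_right he''ne, rfl⟩
      · exfalso
        apply hcon (-(s / t))
        have h1 : t • g = -(s • e'') := by
          rw [eq_neg_iff_add_eq_zero, add_comm]; exact hst
        calc g = t⁻¹ • (t • g) := by rw [smul_smul, inv_mul_cancel₀ ht, one_smul]
        _ = (-(s / t)) • e'' := by
            rw [h1, smul_neg, smul_smul, ← neg_smul]
            congr 1
            field_simp
    have hind : LinearIndependent ℂ ![e'', g] := LinearIndependent.pair_iff.mpr hind0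
    have hindρ : LinearIndependent ℂ ![-e''ᴴ, -gᴴ] := by
      rw [LinearIndependent.pair_iff]
      intro s t hst
      have happ : star s • e'' + star t • g = 0 := by
        have h1 := congrArg (fun Z : Matrix (Fin 2) (Fin 2) ℂ => -Zᴴ) hst
        simp only [Matrix.conjTranspose_add, Matrix.conjTranspose_smul,
          Matrix.conjTranspose_neg, Matrix.conjTranspose_conjTranspose,
          Matrix.conjTranspose_zero, neg_zero, neg_add, smul_neg, neg_neg] at h1
        exact h1
      have h := hind0 _ _ happ
      constructor
      · have := h.1; rwa [star_eq_zero] at this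
      · have := h.2; rwa [star_eq_zero] at this
    set V := Submodule.span ℂ ({e'', g} : Set (Matrix (Fin 2) (Fin 2) ℂ)) with hV
    set W := Submodule.span ℂ ({-e''ᴴ, -gᴴ} : Set (Matrix (Fin 2) (Fin 2) ℂ)) with hW
    set K := LinearMap.ker (Matrix.traceLinearMap (Fin 2) ℂ ℂ) with hK
    have hVK : V ≤ K := by
      rw [hV, Submodule.span_le]
      intro x hx
      rcases hx with rfl | hx
      · exact he''tr
      · rw [Set.mem_singleton_iff] at hx; subst hx; exact hgtr
    have hWK : W ≤ K := by
      rw [hW, Submodule.span_le]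
      intro x hx
      have htr : ∀ z : (Matrix (Fin 2) (Fin 2) ℂ), Matrix.trace z = 0 → (-zᴴ) ∈ K := by
        intro z hz
        have : Matrix.trace (-zᴴ) = 0 := by
          rw [Matrix.trace_neg, Matrix.trace_conjTranspose, hz, star_zero, neg_zero]
        exact this
      rcases hx with rfl | hx
      · exact htr e'' he''tr
      · rw [Set.mem_singleton_iff] at hx; subst hx; exact htr g hgtr
    have hrange : ∀ x y : (Matrix (Fin 2) (Fin 2) ℂ), Set.range ![x, y] = {x, y} := by
      intro x y
      ext z
      simp [Fin.exists_fin_two, or_comm]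
    have hV2 : Module.finrank ℂ V = 2 := by
      have := finrank_span_eq_card hind
      rwa [hrange, Fintype.card_fin] at this
    have hW2 : Module.finrank ℂ W = 2 := by
      have := finrank_span_eq_card hindρ
      rwa [hrange, Fintype.card_fin] at this
    have hK3 : Module.finrank ℂ K = 3 := by
      have hsurj : LinearMap.range (Matrix.traceLinearMap (Fin 2) ℂ ℂ) = ⊤ := by
        rw [LinearMap.range_eq_top]
        intro c
        exact ⟨!![c, 0; 0, 0], by simp [Matrix.traceLinearMap, Matrix.trace_fin_two_of]⟩
      have hrn := LinearMap.finrank_range_add_finrank_ker (Matrix.traceLinearMap (Fin 2) ℂ ℂ)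
      rw [hsurj, finrank_top, Module.finrank_self, h4, ← hK] at hrn
      omega
    have hVW : V ⊓ W ≠ ⊥ := by
      intro hbot
      have hs := Submodule.finrank_sup_add_finrank_inf_eq V W
      rw [hbot, finrank_bot, hV2, hW2] at hs
      have hle : Module.finrank ℂ ↥(V ⊔ W) ≤ 3 := by
        rw [← hK3]
        exact Submodule.finrank_mono (sup_le hVK hWK)
      omega
    obtain ⟨w, hw, hwne⟩ := (Submodule.ne_bot_iff _).mp hVW
    obtain ⟨s, t, hst⟩ := Submodule.mem_span_pair.mp hw.1
    obtain ⟨α, β, hαβ⟩ := Submodule.mem_span_pair.mp hw.2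
    have hwl : w ∈ l := by
      rw [← hst]; exact add_mem (l.smul_mem _ he''l) (l.smul_mem _ hgl)
    have hyl : (starRingEnd ℂ α) • e'' + (starRingEnd ℂ β) • g ∈ l :=
      add_mem (l.smul_mem _ he''l) (l.smul_mem _ hgl)
    have hwy : w = -((starRingEnd ℂ α) • e'' + (starRingEnd ℂ β) • g)ᴴ := by
      rw [← hαβ, Matrix.conjTranspose_add, Matrix.conjTranspose_smul,
        Matrix.conjTranspose_smul, neg_add]
      simp only [smul_neg, starRingEnd_apply, star_star]
    exact hwne (hint w hwl _ hyl hwy)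
  -- the bracket
  have hlie : ⁅f, e''⁆ ∈ l := l.lie_mem hfl he''l
  have hlietr : Matrix.trace ⁅f, e''⁆ = 0 := by
    rw [Ring.lie_def, Matrix.trace_sub, Matrix.trace_mul_comm, sub_self]
  obtain ⟨μ, hμ⟩ := huniq _ hlie hlietr
  set e' : (Matrix (Fin 2) (Fin 2) ℂ) := f - Complex.I • 1 with he'
  have he'tr : Matrix.trace e' = 0 := by
    rw [he', Matrix.trace_sub, Matrix.trace_smul, Matrix.trace_one, hftr]
    simp
    ring
  have hbracket : ⁅e', e''⁆ = μ • e'' := by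
    have hbr : ⁅e', e''⁆ = ⁅f, e''⁆ := by
      rw [he', Ring.lie_def, Ring.lie_def, sub_mul, mul_sub, smul_mul_assoc,
        mul_smul_comm, one_mul, mul_one]
      abel
    rw [hbr, hμ]
  have hμne : μ ≠ 0 := by
    rintro rfl
    rw [zero_smul, Ring.lie_def, sub_eq_zero] at hbracket
    obtain ⟨t, ht⟩ := aux_commutant e' e'' he'tr he''tr he''ne hbracket
    apply hI1
    have hIf : Complex.I • (1 : (Matrix (Fin 2) (Fin 2) ℂ)) = f - t • e'' := by
      rw [← ht, he']; abel
    rw [hIf]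
    exact l.sub_mem hfl (l.smul_mem _ he''l)
  have htr2 : Matrix.trace (e'' * e'') = 0 := by
    have h1 : Matrix.trace (⁅e', e''⁆ * e'') = 0 := by
      rw [Ring.lie_def, sub_mul, Matrix.trace_sub, Matrix.trace_mul_cycle e' e'' e'', sub_self]
    rw [hbracket, smul_mul_assoc, Matrix.trace_smul, smul_eq_mul] at h1
    exact (mul_eq_zero.mp h1).resolve_left hμne
  have hnilp : IsNilpotent e'' := ⟨2, by rw [pow_two]; exact aux_sq_zero e'' he''tr htr2⟩
  have hfe : Complex.I • (1 : (Matrix (Fin 2) (Fin 2) ℂ)) + e' = f := by rw [he']; abel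
  have hspan : l.toSubmodule = Submodule.span ℂ {Complex.I • (1 : (Matrix (Fin 2) (Fin 2) ℂ)) + e', e''} := by
    rw [hfe]
    apply le_antisymm
    · intro x hx
      rw [LieSubalgebra.mem_toSubmodule] at hx
      obtain ⟨c, hc⟩ := huniq _ (hdecomp x hx).1 (hdecomp x hx).2
      rw [Submodule.mem_span_pair]
      refine ⟨Matrix.trace x / (2 * Complex.I), c, ?_⟩
      rw [← hc]
      abel
    · rw [Submodule.span_le]
      intro x hx
      rcases hx with rfl | hx
      · exact hfl
      · rw [Set.mem_singleton_iff] at hx; subst hx; exact he''l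
  exact ⟨e', e'', he'tr, he''tr, hspan, ⟨μ, hμne, hbracket⟩, he''ne, hnilp⟩
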